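/- Refined local limit approximation for the symmetric binomial: for n ∈ ℕ and integer 0 ≤ k ≤ n define f(k) := −(2k−n)⁴/(12n²) + (2k−n)²/(2n) − 1/4 and g(k) := (2k−n)⁸/(288n⁴) − 3(2k−n)⁶/(40n³) + 19(2k−n)⁴/(48n²) − 11(2k−n)²/(24n) + 1/32, and set P̃(k) := (πn/2)^{−1/2} · exp( −(k − n/2)² / (n/2) ) · ( 1 + f(k)/n + g(k)/n² ). Then for every constant A > 0 there exist C > 0 and N such that for all n ≥ N and every integer k with |k − n/2| ≤ (A/2)·√(n·ln n), one has | C(n,k)·2^{−n} − P̃(k) | ≤ C · (ln n)⁶ · n^{−3} · P̃(k). -/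

import Mathlib

open Real Filter Finset

/-- First-order Stirling correction polynomial `f(k)`. -/
noncomputable def fcorr (n k : ℕ) : ℝ :=
  -((2 * (k : ℝ) - n) ^ 4) / (12 * (n : ℝ) ^ 2)
    + (2 * (k : ℝ) - n) ^ 2 / (2 * (n : ℝ)) - 1 / 4

/-- Second-order Stirling correction polynomial `g(k)`. -/
noncomputable def gcorr (n k : ℕ) : ℝ :=
  (2 * (k : ℝ) - n) ^ 8 / (288 * (n : ℝ) ^ 4)
    - 3 * (2 * (k : ℝ) - n) ^ 6 / (40 * (n : ℝ) ^ 3)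
    + 19 * (2 * (k : ℝ) - n) ^ 4 / (48 * (n : ℝ) ^ 2)
    - 11 * (2 * (k : ℝ) - n) ^ 2 / (24 * (n : ℝ)) + 1 / 32

/-- Refined local-limit approximation `P̃(k)` of the `Binomial(n, 1/2)` pmf. -/
noncomputable def Ptilde (n k : ℕ) : ℝ :=
  (Real.sqrt (Real.pi * n / 2))⁻¹ * Real.exp (-(((k : ℝ) - n / 2) ^ 2) / ((n : ℝ) / 2))
    * (1 + fcorr n k / n + gcorr n k / (n : ℝ) ^ 2)




lemma c_est (m : ℕ) (hm : 2 ≤ m) :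
    |((m : ℝ) + 1/2) * Real.log (1 + 1/m) - 1 - 1/(12*m*(m+1))| ≤ 6/(m:ℝ)^4 := by
  have hm2 : (2:ℝ) ≤ (m:ℝ) := by exact_mod_cast hm
  have hm0 : (0:ℝ) < m := by linarith
  have hx : |(-(1/(m:ℝ)))| < 1 := by
    rw [abs_neg, abs_of_pos (by positivity)]; rw [div_lt_one hm0]; linarith
  have h := Real.abs_log_sub_add_sum_range_le hx 4
  simp only [Finset.sum_range_succ, Finset.sum_range_zero] at h
  norm_num at h
  rw [show ((m:ℝ)^5)⁻¹ = ((m:ℝ)⁻¹)^5 by ring, show ((m:ℝ)^4)⁻¹ = (-((m:ℝ))⁻¹)^4 by ring] at h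
  set r : ℝ := Real.log (1 + 1/m) - (1/m - 1/(2*m^2) + 1/(3*m^3) - 1/(4*m^4)) with hr
  have hrb : |r| ≤ 2/(m:ℝ)^5 := by
    have e1 : -((m:ℝ))⁻¹ + ((m:ℝ)^2)⁻¹/2 + (-((m:ℝ))⁻¹)^3/3 + (-((m:ℝ))⁻¹)^4/4
        + Real.log (1 + ((m:ℝ))⁻¹) = r := by
      rw [hr]; field_simp; ring
    rw [e1] at h
    have hhalf : (1:ℝ)/2 ≤ 1 - ((m:ℝ))⁻¹ := by
      have : ((m:ℝ))⁻¹ ≤ 1/2 := by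
        rw [inv_eq_one_div]; rw [div_le_div_iff₀ hm0 (by norm_num)]; linarith
      linarith
    have h5 : ((m:ℝ)⁻¹)^5/(1 - (m:ℝ)⁻¹) ≤ ((m:ℝ)⁻¹)^5/(1/2) := by
      gcongr
    have h6 : ((m:ℝ)⁻¹)^5/(1/2 : ℝ) = 2/(m:ℝ)^5 := by field_simp
    linarith [h, h5, h6.le]
  have key : ((m:ℝ) + 1/2) * Real.log (1 + 1/m) - 1 - 1/(12*m*(m+1))
      = ((m:ℝ)+1/2)*r + (-((2*(m:ℝ) + 3*((m:ℝ)+1))/(24*(m:ℝ)^4*((m:ℝ)+1)))) := by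
    rw [hr]; field_simp; ring
  rw [key]
  have h1 : |((m:ℝ)+1/2)*r| ≤ 4/(m:ℝ)^4 := by
    rw [abs_mul, abs_of_pos (show (0:ℝ) < (m:ℝ)+1/2 by linarith)]
    calc ((m:ℝ)+1/2)*|r| ≤ (2*(m:ℝ))*(2/(m:ℝ)^5) := by
          apply mul_le_mul (by linarith) hrb (abs_nonneg _) (by positivity)
      _ = 4/(m:ℝ)^4 := by field_simp; ring
  have h2 : |(-((2*(m:ℝ) + 3*((m:ℝ)+1))/(24*(m:ℝ)^4*((m:ℝ)+1))))| ≤ 1/(m:ℝ)^4 := by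
    rw [abs_neg, abs_of_pos (by positivity)]
    rw [div_le_div_iff₀ (by positivity) (by positivity)]
    nlinarith [pow_pos hm0 4]
  calc _ ≤ |((m:ℝ)+1/2)*r| + |(-((2*(m:ℝ) + 3*((m:ℝ)+1))/(24*(m:ℝ)^4*((m:ℝ)+1))))| :=
        abs_add_le _ _
    _ ≤ 4/(m:ℝ)^4 + 1/(m:ℝ)^4 := add_le_add h1 h2
    _ = 5/(m:ℝ)^4 := by ring
    _ ≤ 6/(m:ℝ)^4 := by gcongr <;> norm_num


noncomputable def aseq (m : ℕ) : ℝ :=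
  Real.log (m.factorial) - ((m:ℝ) + 1/2) * Real.log m + m

noncomputable def Lc : ℝ := Real.log (Real.sqrt Real.pi) + Real.log 2 / 2

lemma aseq_diff (M : ℕ) (hM : 1 ≤ M) :
    aseq M - aseq (M+1) = ((M:ℝ) + 1/2) * Real.log (1 + 1/M) - 1 := by
  have hM0 : (0:ℝ) < M := by exact_mod_cast hM
  have hfac : ((M+1).factorial : ℝ) = ((M:ℝ)+1) * (M.factorial : ℝ) := by
    rw [Nat.factorial_succ]; push_cast; ring
  have hlog : Real.log ((M+1).factorial) = Real.log ((M:ℝ)+1) + Real.log (M.factorial) := by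
    rw [hfac, Real.log_mul (by positivity) (by positivity)]
  have hlog2 : Real.log (1 + 1/(M:ℝ)) = Real.log ((M:ℝ)+1) - Real.log M := by
    rw [← Real.log_div (by positivity) (by positivity)]
    congr 1; field_simp
  simp only [aseq]
  rw [hlog2]
  push_cast
  rw [hlog]
  ring
lemma one_div_pow4_le (M : ℕ) (hM : 2 ≤ M) :
    (6:ℝ)/(M:ℝ)^4 ≤ 6*(1/((M:ℝ)-1)^3 - 1/(M:ℝ)^3) := by
  have hM2 : (2:ℝ) ≤ (M:ℝ) := by exact_mod_cast hM
  have h1 : (0:ℝ) < (M:ℝ) - 1 := by linarith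
  have h0 : (0:ℝ) < M := by linarith
  have key : 1/((M:ℝ)-1)^3 - 1/(M:ℝ)^3 = (3*(M:ℝ)^2 - 3*M + 1)/(((M:ℝ)-1)^3 * M^3) := by
    field_simp; ring
  rw [key, show (6:ℝ)*((3*(M:ℝ)^2 - 3*M + 1)/(((M:ℝ)-1)^3 * M^3))
      = (6*(3*(M:ℝ)^2 - 3*M + 1))/(((M:ℝ)-1)^3 * M^3) by ring]
  rw [div_le_div_iff₀ (by positivity) (by positivity)]
  have e1 : ((M:ℝ)-1)^3 ≤ (M:ℝ)^3 := by nlinarith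
  nlinarith [pow_pos h1 3, pow_pos h0 3, pow_pos h0 4, mul_pos (pow_pos h1 3) (pow_pos h0 3)]

lemma tele (m : ℕ) (hm : 2 ≤ m) (M : ℕ) (hM : m ≤ M) :
    |aseq m - aseq M - (1/(12*(m:ℝ)) - 1/(12*(M:ℝ)))| ≤
      6*(1/((m:ℝ)-1)^3 - 1/((M:ℝ)-1)^3) := by
  induction M, hM using Nat.le_induction with
  | base => simp
  | succ M hM ih =>
    have hM2 : 2 ≤ M := le_trans hm hM
    have hM2' : (2:ℝ) ≤ (M:ℝ) := by exact_mod_cast hM2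
    have h1 := c_est M hM2
    have h2 := aseq_diff M (by omega)
    have h3 : 1/(12*(M:ℝ)) - 1/(12*((M:ℝ)+1)) = 1/(12*M*(M+1)) := by
      field_simp; ring
    have h4 := one_div_pow4_le M hM2
    have hstep : |aseq M - aseq (M+1) - (1/(12*(M:ℝ)) - 1/(12*((M:ℝ)+1)))| ≤
        6*(1/((M:ℝ)-1)^3 - 1/(M:ℝ)^3) := by
      rw [h2, h3]; exact le_trans h1 h4
    have hc1 : ((M+1:ℕ):ℝ) = (M:ℝ)+1 := by push_cast; ring
    calc |aseq m - aseq (M+1) - (1/(12*(m:ℝ)) - 1/(12*((M+1:ℕ):ℝ)))|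
        = |(aseq m - aseq M - (1/(12*(m:ℝ)) - 1/(12*(M:ℝ))))
            + (aseq M - aseq (M+1) - (1/(12*(M:ℝ)) - 1/(12*((M:ℝ)+1))))| := by
          rw [hc1]; ring_nf
      _ ≤ _ + _ := abs_add_le _ _
      _ ≤ 6*(1/((m:ℝ)-1)^3 - 1/((M:ℝ)-1)^3) + 6*(1/((M:ℝ)-1)^3 - 1/(M:ℝ)^3) :=
          add_le_add ih hstep
      _ = 6*(1/((m:ℝ)-1)^3 - 1/(M:ℝ)^3) := by ring
      _ = 6*(1/((m:ℝ)-1)^3 - 1/(((M+1:ℕ):ℝ)-1)^3) := by rw [hc1]; ring_nf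

lemma aseq_tendsto : Tendsto aseq atTop (nhds Lc) := by
  have h1 : Tendsto (fun M => Real.log (Stirling.stirlingSeq M)) atTop
      (nhds (Real.log (Real.sqrt Real.pi))) :=
    ((Real.continuousAt_log (by positivity)).tendsto).comp Stirling.tendsto_stirlingSeq_sqrt_pi
  have h2 : ∀ᶠ (M:ℕ) in atTop, Real.log (Stirling.stirlingSeq M) + Real.log 2 / 2 = aseq M := by
    filter_upwards [eventually_ge_atTop 1] with M hM
    have hM0 : (0:ℝ) < M := by exact_mod_cast hM
    rw [Stirling.log_stirlingSeq_formula]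
    rw [Real.log_mul (by norm_num) (by positivity), Real.log_div (by positivity)
      (Real.exp_ne_zero 1), Real.log_exp]
    simp only [aseq]
    ring
  have h3 : Tendsto (fun M => Real.log (Stirling.stirlingSeq M) + Real.log 2 / 2) atTop
      (nhds Lc) := by
    exact h1.add_const _
  exact h3.congr' h2

/-- Quantitative Stirling: for `m ≥ 2`. -/
lemma stirling_est (m : ℕ) (hm : 2 ≤ m) :
    |Real.log (m.factorial) - (((m:ℝ) + 1/2) * Real.log m - m + Lc + 1/(12*m))| ≤
      48/(m:ℝ)^3 := by
  have hm2 : (2:ℝ) ≤ (m:ℝ) := by exact_mod_cast hm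
  have hm1 : (0:ℝ) < (m:ℝ) - 1 := by linarith
  have hM0 : Tendsto (fun M : ℕ => 1/(12*(M:ℝ))) atTop (nhds 0) := by
    have := tendsto_const_div_atTop_nhds_zero_nat (1/12 : ℝ)
    apply this.congr'
    filter_upwards [eventually_ge_atTop 1] with M hM
    have : (0:ℝ) < M := by exact_mod_cast hM
    field_simp
  have key : |aseq m - Lc - 1/(12*(m:ℝ))| ≤ 6/((m:ℝ)-1)^3 := by
    have htd : Tendsto (fun M : ℕ => |aseq m - aseq M - (1/(12*(m:ℝ)) - 1/(12*(M:ℝ)))|)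
        atTop (nhds (|aseq m - Lc - 1/(12*(m:ℝ))|)) := by
      have h1 : Tendsto (fun M : ℕ => aseq m - aseq M - (1/(12*(m:ℝ)) - 1/(12*(M:ℝ))))
          atTop (nhds (aseq m - Lc - (1/(12*(m:ℝ)) - 0))) :=
        (tendsto_const_nhds.sub aseq_tendsto).sub (tendsto_const_nhds.sub hM0)
      rw [sub_zero] at h1
      exact h1.abs
    apply le_of_tendsto htd
    filter_upwards [eventually_ge_atTop m] with M hM
    calc |aseq m - aseq M - (1/(12*(m:ℝ)) - 1/(12*(M:ℝ)))|
        ≤ 6*(1/((m:ℝ)-1)^3 - 1/((M:ℝ)-1)^3) := tele m hm M hM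
      _ ≤ 6/((m:ℝ)-1)^3 := by
          have hM1 : (0:ℝ) < (M:ℝ) - 1 := by
            have : (2:ℝ) ≤ (M:ℝ) := by exact_mod_cast le_trans hm hM
            linarith
          have : (0:ℝ) ≤ 1/((M:ℝ)-1)^3 := by positivity
          rw [show (6:ℝ)/((m:ℝ)-1)^3 = 6*(1/((m:ℝ)-1)^3) by ring]
          nlinarith
  have htr : (6:ℝ)/((m:ℝ)-1)^3 ≤ 48/(m:ℝ)^3 := by
    rw [div_le_div_iff₀ (by positivity) (by positivity)]
    nlinarith [mul_nonneg (sub_nonneg.2 hm2) (sq_nonneg ((m:ℝ)-1)), sq_nonneg ((m:ℝ)-2),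
      sub_nonneg.2 hm2]
  have heq : Real.log (m.factorial) - (((m:ℝ) + 1/2) * Real.log m - m + Lc + 1/(12*m))
      = aseq m - Lc - 1/(12*(m:ℝ)) := by simp only [aseq]; ring
  rw [heq]
  linarith


/-- log Taylor remainder, degree 7, radius 1/2 -/
lemma log_taylor7 {x : ℝ} (h : |x| ≤ 1/2) :
    |Real.log (1-x) + (x + x^2/2 + x^3/3 + x^4/4 + x^5/5 + x^6/6 + x^7/7)| ≤ 2*|x|^8 := by
  have hx : |x| < 1 := lt_of_le_of_lt h (by norm_num)
  have hh := Real.abs_log_sub_add_sum_range_le hx 7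
  simp only [Finset.sum_range_succ, Finset.sum_range_zero] at hh
  norm_num at hh
  have h2 : |x|^8/(1-|x|) ≤ 2*|x|^8 := by
    have h3 : (1:ℝ)/2 ≤ 1 - |x| := by linarith
    rw [div_le_iff₀ (by linarith [abs_nonneg x])]
    nlinarith [pow_nonneg (abs_nonneg x) 8]
  calc |Real.log (1-x) + (x + x^2/2 + x^3/3 + x^4/4 + x^5/5 + x^6/6 + x^7/7)|
      = |x + x^2/2 + x^3/3 + x^4/4 + x^5/5 + x^6/6 + x^7/7 + Real.log (1-x)| := by
        rw [add_comm]
    _ ≤ |x|^8/(1-|x|) := by convert hh using 2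
    _ ≤ 2*|x|^8 := h2

lemma H_est {v : ℝ} (hv : |v| ≤ 1/2) :
    |(1+v)*Real.log (1+v) + (1-v)*Real.log (1-v) - (v^2 + v^4/6 + v^6/15)| ≤ 7*v^8 := by
  have hv' : |(-v)| ≤ 1/2 := by rwa [abs_neg]
  have habs : |v|^8 = v^8 := by rw [← abs_pow]; exact abs_of_nonneg (by positivity)
  have h1 := log_taylor7 hv
  have h2 := log_taylor7 hv'
  rw [show (1:ℝ) - -v = 1 + v by ring, abs_neg, habs] at h2
  rw [habs] at h1
  set r1 : ℝ := Real.log (1-v) + (v + v^2/2 + v^3/3 + v^4/4 + v^5/5 + v^6/6 + v^7/7) with hr1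
  set r2 : ℝ := Real.log (1+v) + ((-v) + (-v)^2/2 + (-v)^3/3 + (-v)^4/4 + (-v)^5/5 + (-v)^6/6
      + (-v)^7/7) with hr2
  have key : (1+v)*Real.log (1+v) + (1-v)*Real.log (1-v) - (v^2 + v^4/6 + v^6/15)
      = (1+v)*r2 + (1-v)*r1 + 2*v^8/7 := by
    rw [hr1, hr2]; ring
  rw [key]
  have hb1 : |(1-v)*r1| ≤ (3/2)*(2*v^8) := by
    rw [abs_mul]
    apply mul_le_mul _ h1 (abs_nonneg _) (by norm_num)
    rw [abs_le] at hv ⊢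
    constructor <;> [linarith [hv.2]; linarith [hv.1]]
  have hb2 : |(1+v)*r2| ≤ (3/2)*(2*v^8) := by
    rw [abs_mul]
    apply mul_le_mul _ h2 (abs_nonneg _) (by norm_num)
    rw [abs_le] at hv ⊢
    constructor <;> [linarith [hv.1]; linarith [hv.2]]
  have hv8 : (0:ℝ) ≤ v^8 := by positivity
  calc |(1+v)*r2 + (1-v)*r1 + 2*v^8/7|
      ≤ |(1+v)*r2 + (1-v)*r1| + |2*v^8/7| := abs_add_le _ _
    _ ≤ |(1+v)*r2| + |(1-v)*r1| + |2*v^8/7| := by linarith [abs_add_le ((1+v)*r2) ((1-v)*r1)]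
    _ ≤ (3/2)*(2*v^8) + (3/2)*(2*v^8) + 2*v^8/7 := by
        refine add_le_add (add_le_add hb2 hb1) ?_
        rw [abs_of_nonneg (by positivity)]
    _ ≤ 7*v^8 := by nlinarith

lemma log2_est {v : ℝ} (hv : |v| ≤ 1/2) :
    |(-(1/2))*Real.log (1-v^2) - (v^2/2 + v^4/4)| ≤ v^6 := by
  have hx : |v^2| < 1 := by
    rw [abs_of_nonneg (sq_nonneg v)]
    nlinarith [abs_nonneg v, sq_abs v, abs_le.1 hv]
  have hh := Real.abs_log_sub_add_sum_range_le hx 2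
  simp only [Finset.sum_range_succ, Finset.sum_range_zero] at hh
  norm_num at hh
  have hd : (v^2)^3/(1-v^2) ≤ 2*v^6 := by
    have h1 : v^2 ≤ 1/2 := by nlinarith [sq_abs v, abs_le.1 hv, abs_nonneg v]
    rw [div_le_iff₀ (by linarith)]
    nlinarith [pow_nonneg (sq_nonneg v) 3]
  have e : (-(1/2))*Real.log (1-v^2) - (v^2/2 + v^4/4)
      = (-(1/2)) * (v^2 + (v^2)^2/2 + Real.log (1-v^2)) := by ring
  rw [e, abs_mul]
  rw [show |(-(1/2):ℝ)| = 1/2 by rw [abs_neg, abs_of_nonneg]; norm_num]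
  calc (1/2:ℝ) * |v^2 + (v^2)^2/2 + Real.log (1-v^2)| ≤ (1/2) * ((v^2)^3/(1-v^2)) := by
        apply mul_le_mul_of_nonneg_left hh (by norm_num)
    _ ≤ (1/2) * (2*v^6) := by apply mul_le_mul_of_nonneg_left hd (by norm_num)
    _ = v^6 := by ring


lemma exp_taylor2 {x : ℝ} (h : |x| ≤ 1) : |Real.exp x - (1 + x + x^2/2)| ≤ |x|^3 := by
  have hb := Real.exp_bound h (n := 3) (by norm_num)
  simp only [Finset.sum_range_succ, Finset.sum_range_zero] at hb
  norm_num at hb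
  calc |Real.exp x - (1 + x + x^2/2)| = |Real.exp x - (0 + 1 + x + x^2/2)| := by norm_num
    _ ≤ |x|^3 * (4/(6*3)) := by convert hb using 2 <;> norm_num
    _ ≤ |x|^3 := by nlinarith [pow_nonneg (abs_nonneg x) 3]

set_option maxHeartbeats 2000000 in
/-- Refined local limit theorem for the symmetric binomial: on the
window `|k − n/2| ≤ (A/2)√(n ln n)`,
`C(n,k)·2^{−n} = P̃(k)·(1 + O((ln n)⁶/n³))`. -/
theorem binomial_local_limit_refined :
    ∀ A : ℝ, 0 < A → ∃ C : ℝ, 0 < C ∧ ∃ N : ℕ, ∀ n : ℕ, N ≤ n →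
      ∀ k : ℕ, k ≤ n → |(k : ℝ) - (n : ℝ) / 2| ≤ (A / 2) * Real.sqrt (n * Real.log n) →
        |(n.choose k : ℝ) / 2 ^ n - Ptilde n k|
          ≤ C * (Real.log n) ^ 6 / (n : ℝ) ^ 3 * Ptilde n k := by
  intro A hA
  set M : ℝ := max A 1 with hM_def
  clear_value M
  have hM1 : (1:ℝ) ≤ M := by rw [hM_def]; exact le_max_right _ _
  have hAM : A ≤ M := by rw [hM_def]; exact le_max_left _ _
  have hM0 : (0:ℝ) < M := by linarith
  refine ⟨96000*M^12, by positivity, ?_⟩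
  -- eventual conditions
  have hcomp : Tendsto (fun n : ℕ => (n:ℝ)) atTop atTop := tendsto_natCast_atTop_atTop
  have ev2 : ∀ᶠ (n:ℕ) in atTop, 9*A^2*Real.log n ≤ n := by
    have t1 : Tendsto (fun x:ℝ => Real.log x ^ 1 / (1*x+0)) atTop (nhds 0) :=
      Real.tendsto_pow_log_div_mul_add_atTop 1 0 1 one_ne_zero
    have t2 : Tendsto (fun n:ℕ => (9*A^2+1) * (Real.log n ^ 1 / (1*(n:ℝ)+0))) atTop (nhds 0) := by
      simpa using ((t1.comp hcomp).const_mul (9*A^2+1))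
    have t3 := t2.eventually (gt_mem_nhds (show (0:ℝ) < 1 by norm_num))
    filter_upwards [t3, eventually_ge_atTop 1] with n h1 h2
    have hn0 : (0:ℝ) < n := by exact_mod_cast h2
    simp only [pow_one, one_mul, add_zero, Set.mem_setOf_eq] at h1
    have h4 : (9*A^2+1) * (Real.log n / n) < 1 := h1
    rw [mul_div_assoc'] at h4
    rw [div_lt_one hn0] at h4
    nlinarith [Real.log_natCast_nonneg n]
  have ev3 : ∀ᶠ (n:ℕ) in atTop, 34*M^4*(Real.log n)^2 ≤ n := by
    have t1 : Tendsto (fun x:ℝ => Real.log x ^ 2 / (1*x+0)) atTop (nhds 0) :=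
      Real.tendsto_pow_log_div_mul_add_atTop 1 0 2 one_ne_zero
    have t2 : Tendsto (fun n:ℕ => (34*M^4) * (Real.log n ^ 2 / (1*(n:ℝ)+0))) atTop (nhds 0) := by
      simpa using ((t1.comp hcomp).const_mul (34*M^4))
    have t3 := t2.eventually (gt_mem_nhds (show (0:ℝ) < 1 by norm_num))
    filter_upwards [t3, eventually_ge_atTop 1] with n h1 h2
    have hn0 : (0:ℝ) < n := by exact_mod_cast h2
    simp only [one_mul, add_zero, Set.mem_setOf_eq] at h1
    have h4 : (34*M^4) * ((Real.log n)^2 / n) < 1 := h1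
    rw [mul_div_assoc'] at h4
    rw [div_lt_one hn0] at h4
    linarith
  obtain ⟨N, hN⟩ := eventually_atTop.1 ((eventually_ge_atTop 6).and (ev2.and ev3))
  refine ⟨N, ?_⟩
  intro n hn k hk hw
  obtain ⟨hn6, h9A, h34⟩ := hN n hn
  set m : ℝ := (n:ℝ) with hm_def
  clear_value m
  set l : ℝ := Real.log m with hl_def
  clear_value l
  have hm6 : (6:ℝ) ≤ m := by rw [hm_def]; exact_mod_cast hn6
  have hm0 : (0:ℝ) < m := by linarith
  have hl1 : (1:ℝ) ≤ l := by
    rw [hl_def, Real.le_log_iff_exp_le hm0]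
    have h3 := Real.exp_one_lt_d9
    linarith only [h3, hm6]
  have hl0 : (0:ℝ) < l := by linarith only [hl1]
  -- window control
  have hml0 : (0:ℝ) ≤ m * l := by positivity
  have ht2 : (2*(k:ℝ) - m)^2 ≤ A^2*(m*l) := by
    have h1 : |2*(k:ℝ) - m| ≤ A * Real.sqrt (m*l) := by
      have e : |2*(k:ℝ) - m| = 2 * |(k:ℝ) - m/2| := by
        rw [show 2*(k:ℝ) - m = 2*((k:ℝ) - m/2) by ring, abs_mul]
        norm_num
      rw [e]
      calc 2 * |(k:ℝ) - m/2| ≤ 2 * ((A/2) * Real.sqrt (m*l)) := by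
            apply mul_le_mul_of_nonneg_left hw (by norm_num)
        _ = A * Real.sqrt (m*l) := by ring
    calc (2*(k:ℝ) - m)^2 = |2*(k:ℝ) - m|^2 := (sq_abs _).symm
      _ ≤ (A * Real.sqrt (m*l))^2 := by
          apply pow_le_pow_left₀ (abs_nonneg _) h1
      _ = A^2 * (m*l) := by
          rw [mul_pow, Real.sq_sqrt hml0]
  set u : ℝ := (2*(k:ℝ) - m)/m with hu_def
  clear_value u
  have hu2A : u^2 ≤ A^2*l/m := by
    rw [hu_def, div_pow]
    rw [div_le_div_iff₀ (by positivity) hm0]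
    calc (2*(k:ℝ) - m)^2 * m ≤ (A^2*(m*l)) * m := by
          apply mul_le_mul_of_nonneg_right ht2 (le_of_lt hm0)
      _ = A^2*l*m^2 := by ring
  have h9A' : 9*A^2*l ≤ m := h9A
  have hu19 : u^2 ≤ 1/9 := by
    have hA2 : A^2*l/m ≤ 1/9 := by
      rw [div_le_div_iff₀ hm0 (by norm_num)]
      linarith only [h9A']
    linarith only [hA2, hu2A]
  have hu13 : |u| ≤ 1/3 := by
    have h1 := Real.sqrt_le_sqrt hu19
    rw [show u^2 = |u|^2 by rw [sq_abs], Real.sqrt_sq (abs_nonneg u),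
      show (1/9:ℝ) = (1/3)^2 by norm_num, Real.sqrt_sq (by norm_num)] at h1
    exact h1
  have hu1 : -(1:ℝ)/3 ≤ u ∧ u ≤ 1/3 := by
    have h5 := abs_le.1 hu13
    exact ⟨by linarith only [h5.1], by linarith only [h5.2]⟩
  have h1u : (0:ℝ) < 1 + u := by linarith only [hu1.1]
  have h1u' : (0:ℝ) < 1 - u := by linarith only [hu1.2]
  have h1u2 : (8:ℝ)/9 ≤ 1 - u^2 := by linarith only [hu19]
  have h1u2' : (0:ℝ) < 1 - u^2 := by linarith only [h1u2]
  -- k and n-k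
  have hkr : (k:ℝ) = m/2*(1+u) := by rw [hu_def]; field_simp; ring
  set d : ℝ := m - (k:ℝ) with hd_def
  clear_value d
  have hdr : d = m/2*(1-u) := by rw [hd_def, hu_def]; field_simp; ring
  have hk3 : m/3 ≤ (k:ℝ) := by
    rw [hkr]
    have h5 := mul_le_mul_of_nonneg_left hu1.1 hm0.le
    linarith only [h5, hm0]
  have hd3 : m/3 ≤ d := by
    rw [hdr]
    have h5 := mul_le_mul_of_nonneg_left hu1.2 hm0.le
    linarith only [h5, hm0]
  have hk0 : (0:ℝ) < (k:ℝ) := by linarith only [hk3, hm0]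
  have hd0 : (0:ℝ) < d := by linarith only [hd3, hm0]
  have hk2 : (2:ℝ) ≤ (k:ℝ) := by linarith only [hk3, hm6]
  have hd2 : (2:ℝ) ≤ d := by linarith only [hd3, hm6]
  have hknat2 : 2 ≤ k := by exact_mod_cast hk2
  have hdcast : ((n-k:ℕ):ℝ) = d := by rw [hd_def, hm_def]; push_cast [hk]; ring
  have hdnat2 : 2 ≤ n - k := by
    have : (2:ℝ) ≤ ((n-k:ℕ):ℝ) := by rw [hdcast]; exact hd2
    exact_mod_cast this
  -- Stirling
  have stn := stirling_est n (by omega)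
  rw [← hm_def] at stn
  have stk := stirling_est k hknat2
  have std := stirling_est (n-k) hdnat2
  rw [hdcast] at std
  set En : ℝ := Real.log (n.factorial) - ((m + 1/2) * Real.log m - m + Lc + 1/(12*m))
    with hEn_def
  clear_value En
  set Ek : ℝ := Real.log (k.factorial) - (((k:ℝ) + 1/2) * Real.log (k:ℝ) - (k:ℝ) + Lc
    + 1/(12*(k:ℝ))) with hEk_def
  clear_value Ek
  set Ed : ℝ := Real.log ((n-k).factorial) - ((d + 1/2) * Real.log d - d + Lc + 1/(12*d))
    with hEd_def
  clear_value Ed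
  have hEnb : |En| ≤ 48/m^3 := stn
  have hEkb : |Ek| ≤ 48/(k:ℝ)^3 := stk
  have hEdb : |Ed| ≤ 48/d^3 := std
  -- pmf and its log
  have hch0 : (0:ℝ) < (n.choose k : ℝ) := by exact_mod_cast Nat.choose_pos hk
  have hpw0 : (0:ℝ) < (2:ℝ)^n := by positivity
  have hpmf0 : (0:ℝ) < (n.choose k : ℝ)/2^n := by positivity
  have hfn0 : (0:ℝ) < (n.factorial : ℝ) := by exact_mod_cast n.factorial_pos
  have hfk0 : (0:ℝ) < (k.factorial : ℝ) := by exact_mod_cast k.factorial_pos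
  have hfd0 : (0:ℝ) < ((n-k).factorial : ℝ) := by exact_mod_cast (n-k).factorial_pos
  have hlpmf : Real.log ((n.choose k : ℝ)/2^n) = Real.log (n.factorial)
      - Real.log (k.factorial) - Real.log ((n-k).factorial) - m*Real.log 2 := by
    rw [Nat.cast_choose ℝ hk, div_div, Real.log_div (by positivity) (by positivity),
      Real.log_mul (by positivity) (by positivity), Real.log_mul (by positivity) (by positivity),
      Real.log_pow]
    push_cast
    rw [← hm_def]
    ring
  set W : ℝ := Real.log ((n.choose k : ℝ)/2^n) + (1/2)*Real.log (Real.pi*m/2) + m*u^2/2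
    with hW_def
  clear_value W
  set L0 : ℝ := -1/(4*m) + u^2/2 - m*u^4/12 with hL0_def
  clear_value L0
  set L1 : ℝ := -u^2/(3*m) + u^4/4 - m*u^6/30 with hL1_def
  clear_value L1
  set hH : ℝ := (1+u)*Real.log (1+u) + (1-u)*Real.log (1-u) - (u^2 + u^4/6 + u^6/15)
    with hhH_def
  clear_value hH
  set h2e : ℝ := (-(1/2))*Real.log (1-u^2) - (u^2/2 + u^4/4) with hh2e_def
  clear_value h2e
  set h3e : ℝ := (1/(12*m) - 1/(12*(k:ℝ)) - 1/(12*d)) - (-1/(4*m) - u^2/(3*m)) with hh3e_def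
  clear_value h3e
  set dl : ℝ := -(m/2)*hH + h2e + h3e + (En - Ek - Ed) with hdl_def
  clear_value dl
  -- log identities
  have e1 : Real.log (k:ℝ) = Real.log m - Real.log 2 + Real.log (1+u) := by
    rw [hkr, Real.log_mul (by positivity) (by positivity), Real.log_div (by positivity)
      (by norm_num)]
  have e2 : Real.log d = Real.log m - Real.log 2 + Real.log (1-u) := by
    rw [hdr, Real.log_mul (by positivity) (by positivity), Real.log_div (by positivity)
      (by norm_num)]
  have e3 : Real.log (Real.pi*m/2) = Real.log Real.pi + Real.log m - Real.log 2 := by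
    rw [Real.log_div (by positivity) (by norm_num),
      Real.log_mul (by positivity) (by positivity)]
  have e4 : Real.log (1-u^2) = Real.log (1+u) + Real.log (1-u) := by
    rw [show (1:ℝ)-u^2 = (1+u)*(1-u) by ring, Real.log_mul (by positivity) (by positivity)]
  have e5 : Lc = (1/2)*Real.log Real.pi + (1/2)*Real.log 2 := by
    rw [Lc, Real.log_sqrt Real.pi_pos.le]; ring
  -- the master identity
  have hWeq : W = L0 + L1 + dl := by
    rw [hW_def, hlpmf, hdl_def, hhH_def, hh2e_def, hh3e_def, hEn_def, hEk_def, hEd_def]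
    rw [e1, e2, e3, e4, e5, hkr, hdr, hL0_def, hL1_def]
    have hd_eq : d = m - m/2*(1+u) := by rw [← hkr]; exact hd_def
    field_simp
    ring
  -- Ptilde structure
  have htu : 2*(k:ℝ) - m = m*u := by rw [hu_def]; field_simp
  have harg : -(((k:ℝ) - m/2)^2)/(m/2) = -(m*u^2/2) := by
    rw [hu_def]; field_simp
  have hPt : Ptilde n k = (Real.sqrt (Real.pi*m/2))⁻¹ * Real.exp (-(m*u^2/2))
      * (1 + fcorr n k/m + gcorr n k/m^2) := by
    simp only [Ptilde, ← hm_def]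
    rw [harg]
  have hf : fcorr n k/m = L0 := by
    simp only [fcorr, ← hm_def]
    rw [htu, hL0_def]; field_simp; ring
  have hg : gcorr n k/m^2 = L0^2/2 + L1 := by
    simp only [gcorr, ← hm_def]
    rw [htu, hL0_def, hL1_def]; field_simp; ring
  set Q : ℝ := 1 + fcorr n k/m + gcorr n k/m^2 with hQ_def
  clear_value Q
  have hQeq : Q = 1 + L0 + (L0^2/2 + L1) := by rw [hQ_def, hf, hg]
  have hpmf_exp : (n.choose k:ℝ)/2^n = (Real.sqrt (Real.pi*m/2))⁻¹
      * Real.exp (-(m*u^2/2)) * Real.exp W := by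
    have h1 : (Real.sqrt (Real.pi*m/2))⁻¹ = Real.exp (-((1/2)*Real.log (Real.pi*m/2))) := by
      rw [Real.exp_neg]
      congr 1
      rw [show (1/2)*Real.log (Real.pi*m/2) = Real.log (Real.pi*m/2)/2 by ring,
        ← Real.log_sqrt (by positivity), Real.exp_log (Real.sqrt_pos.2 (by positivity))]
    rw [h1, ← Real.exp_add, ← Real.exp_add, hW_def]
    rw [show -((1/2)*Real.log (Real.pi*m/2)) + -(m*u^2/2)
        + (Real.log ((n.choose k:ℝ)/2^n) + (1/2)*Real.log (Real.pi*m/2) + m*u^2/2)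
        = Real.log ((n.choose k:ℝ)/2^n) by ring]
    rw [Real.exp_log hpmf0]
  -- numeric scale b
  set b : ℝ := M^2*l/m with hb_def
  clear_value b
  have hbpos : (0:ℝ) < b := by rw [hb_def]; positivity
  have hmbeq : m*b = M^2*l := by rw [hb_def]; field_simp
  have hmb1 : (1:ℝ) ≤ m*b := by
    rw [hmbeq]
    nlinarith only [hM1, hl1, sq_nonneg M, sq_nonneg (M-1)]
  have hub : u^2 ≤ b := by
    apply le_trans hu2A
    rw [hb_def]
    have hA2M2 : A^2 ≤ M^2 := by nlinarith only [hAM, hA]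
    have : A^2*l ≤ M^2*l := by nlinarith only [hA2M2, hl0]
    exact div_le_div_of_nonneg_right this hm0.le
  have hm1b : 1/m ≤ b := by rw [div_le_iff₀ hm0]; linarith only [hmb1]
  have hmb2 : m*b^2 ≤ 1/34 := by
    have e : m*b^2 = M^4*l^2/m := by rw [hb_def]; field_simp
    rw [e, div_le_div_iff₀ hm0 (by norm_num : (0:ℝ) < 34)]
    linarith only [h34]
  have hb2small : b^2 ≤ 1/204 := by nlinarith only [hmb2, hm6, sq_nonneg b]
  have hb9 : b ≤ 1/9 := by nlinarith only [hb2small, hbpos]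
  have hu4 : u^4 ≤ b^2 := by nlinarith only [hub, sq_nonneg u, hbpos]
  have hu6 : u^6 ≤ b^3 := by nlinarith only [hub, hu4, sq_nonneg u, sq_nonneg b]
  have hu8 : u^8 ≤ b^4 := by nlinarith only [hub, hu6, sq_nonneg u, pow_nonneg hbpos.le 3]
  have hmb14 : (1:ℝ) ≤ (m*b)^4 := by
    calc (1:ℝ) = 1^4 := by norm_num
      _ ≤ (m*b)^4 := pow_le_pow_left₀ (by norm_num) hmb1 4
  have hmb12 : (1:ℝ) ≤ (m*b)^2 := by
    calc (1:ℝ) = 1^2 := by norm_num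
      _ ≤ (m*b)^2 := pow_le_pow_left₀ (by norm_num) hmb1 2
  have hbm : b ≤ m*b^2 := by nlinarith only [hmb1, hbpos]
  have hb2m : b^2 ≤ m*b^3 := by nlinarith only [hmb1, hbpos, sq_nonneg b]
  have hb2mb4 : b^2/m ≤ m*b^4 := by
    rw [div_le_iff₀ hm0]
    nlinarith only [hmb12, sq_nonneg b]
  have hm3b : 1/m^3 ≤ m*b^4 := by
    rw [div_le_iff₀ (by positivity)]
    nlinarith only [hmb14]
  -- bounds on L0, L1, dl
  have tri3 : ∀ x y z : ℝ, |x+y+z| ≤ |x|+|y|+|z| := by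
    intro x y z
    calc |x+y+z| ≤ |x+y| + |z| := abs_add_le _ _
      _ ≤ |x|+|y|+|z| := by linarith only [abs_add_le x y]
  have hmu4 : m*u^4 ≤ m*b^2 := mul_le_mul_of_nonneg_left hu4 hm0.le
  have hmu6 : m*u^6 ≤ m*b^3 := mul_le_mul_of_nonneg_left hu6 hm0.le
  have hmu8 : m*u^8 ≤ m*b^4 := mul_le_mul_of_nonneg_left hu8 hm0.le
  have hmu4nn : (0:ℝ) ≤ m*u^4 := by positivity
  have hmu6nn : (0:ℝ) ≤ m*u^6 := by positivity
  have hmbnn2 : (0:ℝ) ≤ m*b^2 := by positivity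
  have hmbnn3 : (0:ℝ) ≤ m*b^3 := by positivity
  have p1 : 1/(4*m) ≤ m*b^2/4 := by
    rw [div_le_div_iff₀ (by positivity) (by norm_num)]
    nlinarith only [hmb12]
  have hp0 : (0:ℝ) ≤ 1/(4*m) := by positivity
  have hL0b : |L0| ≤ m*b^2 := by
    rw [hL0_def, show (-1/(4*m) + u^2/2 - m*u^4/12 : ℝ)
      = -(1/(4*m)) + u^2/2 - m*u^4/12 by ring, abs_le]
    constructor <;>
      linarith only [p1, hp0, hub, hbm, hmu4, sq_nonneg u, hmu4nn, hmbnn2]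
  have hL1b : |L1| ≤ m*b^3 := by
    rw [hL1_def, show (-u^2/(3*m) + u^4/4 - m*u^6/30 : ℝ)
      = -(u^2/(3*m)) + u^4/4 - m*u^6/30 by ring, abs_le]
    have d1 : u^2/(3*m) ≤ m*b^3/3 := by
      rw [div_le_div_iff₀ (by positivity) (by norm_num)]
      calc u^2*3 ≤ b*3 := by linarith only [hub]
        _ ≤ m*b^3*(3*m) := by nlinarith only [hmb12, hbpos]
    have d2 : u^4/4 ≤ m*b^3/4 := by linarith only [hu4, hb2m]
    have d3 : m*u^6/30 ≤ m*b^3/30 := by linarith only [hmu6]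
    have hp1 : (0:ℝ) ≤ u^2/(3*m) := by positivity
    have hp2 : (0:ℝ) ≤ u^4/4 := by positivity
    have hp3 : (0:ℝ) ≤ m*u^6/30 := by linarith only [hmu6nn]
    constructor <;> linarith only [d1, d2, d3, hp1, hp2, hp3, hmbnn3]
  have h3eq : h3e = -(u^4/(3*m*(1-u^2))) := by
    rw [hh3e_def, hkr, hdr]
    field_simp
    ring
  have h3b : |h3e| ≤ u^4/(2*m) := by
    rw [h3eq, abs_neg, abs_of_nonneg (by positivity)]
    apply div_le_div_of_nonneg_left (by positivity) (by positivity)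
    nlinarith only [h1u2, hm0]
  have hHb : |hH| ≤ 7*u^8 := by
    rw [hhH_def]
    exact H_est (le_trans hu13 (by norm_num))
  have h2b : |h2e| ≤ u^6 := by
    rw [hh2e_def]
    exact log2_est (le_trans hu13 (by norm_num))
  have hEkb' : |Ek| ≤ 1296/m^3 := by
    apply le_trans hEkb
    calc 48/(k:ℝ)^3 ≤ 48/(m^3/27) := by
          apply div_le_div_of_nonneg_left (by norm_num) (by positivity)
          calc m^3/27 = (m/3)^3 := by ring
            _ ≤ (k:ℝ)^3 := pow_le_pow_left₀ (by positivity) hk3 3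
      _ = 1296/m^3 := by field_simp; ring
  have hEdb' : |Ed| ≤ 1296/m^3 := by
    apply le_trans hEdb
    calc 48/d^3 ≤ 48/(m^3/27) := by
          apply div_le_div_of_nonneg_left (by norm_num) (by positivity)
          calc m^3/27 = (m/3)^3 := by ring
            _ ≤ d^3 := pow_le_pow_left₀ (by positivity) hd3 3
      _ = 1296/m^3 := by field_simp; ring
  have hmbnn4 : (0:ℝ) ≤ m*b^4 := by positivity
  have hdlb : |dl| ≤ 2646*(m*b^4) := by
    rw [hdl_def]
    have t1 : |(-(m/2)*hH) + h2e + h3e + (En - Ek - Ed)|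
        ≤ |(-(m/2)*hH)| + |h2e| + |h3e| + (|En| + |Ek| + |Ed|) := by
      calc |(-(m/2)*hH) + h2e + h3e + (En - Ek - Ed)|
          ≤ |(-(m/2)*hH) + h2e + h3e| + |En - Ek - Ed| := abs_add_le _ _
        _ ≤ (|(-(m/2)*hH)| + |h2e| + |h3e|) + (|En| + |Ek| + |Ed|) := by
            refine add_le_add (tri3 _ _ _) ?_
            calc |En - Ek - Ed| ≤ |En - Ek| + |Ed| := abs_sub _ _
              _ ≤ |En| + |Ek| + |Ed| := by linarith only [abs_sub En Ek]
    have t2 : |(-(m/2)*hH)| ≤ (7/2)*(m*u^8) := by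
      rw [abs_mul, show |(-(m/2))| = m/2 by
        rw [show (-(m/2)) = -(m/2) by ring, abs_neg, abs_of_nonneg (by positivity)]]
      nlinarith only [hHb, hm0, abs_nonneg hH]
    have t3 : (7/2)*(m*u^8) ≤ (7/2)*(m*b^4) := by linarith only [hmu8]
    have t4 : u^6 ≤ m*b^4 := by
      calc u^6 ≤ b^3 := hu6
        _ ≤ m*b^4 := by nlinarith only [hmb1, hbpos, pow_nonneg hbpos.le 3]
    have t5 : u^4/(2*m) ≤ m*b^4/2 := by
      have t5a : u^4/(2*m) ≤ b^2/(2*m) := by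
        exact div_le_div_of_nonneg_right hu4 (by positivity)
      calc u^4/(2*m) ≤ b^2/(2*m) := t5a
        _ = (b^2/m)/2 := by ring
        _ ≤ m*b^4/2 := by linarith only [hb2mb4]
    have t6 : |En| + |Ek| + |Ed| ≤ 2640/m^3 := by
      have e6 : (2640:ℝ)/m^3 = 48/m^3 + 1296/m^3 + 1296/m^3 := by ring
      rw [e6]
      linarith only [hEnb, hEkb', hEdb']
    have t7 : (2640:ℝ)/m^3 ≤ 2640*(m*b^4) := by
      calc (2640:ℝ)/m^3 = 2640*(1/m^3) := by ring
        _ ≤ 2640*(m*b^4) := by linarith only [hm3b]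
    linarith only [t1, t2, t3, h2b, t4, h3b, t5, t6, t7, hmbnn4]
  -- W bounds
  have hmbb3 : m*b^3 ≤ (1/9)*(m*b^2) := by nlinarith only [hb9, hmbnn2, hm0, sq_nonneg b]
  have hmbb4 : m*b^4 ≤ (1/204)*(m*b^2) := by nlinarith only [hb2small, hmbnn2, hm0, sq_nonneg b]
  have hmbb43 : m*b^4 ≤ (1/9)*(m*b^3) := by nlinarith only [hb9, hmbnn3, hm0, pow_nonneg hbpos.le 3]
  have hWb : |W| ≤ 34*(m*b^2) := by
    rw [hWeq]
    calc |L0 + L1 + dl| ≤ |L0| + |L1| + |dl| := tri3 _ _ _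
      _ ≤ m*b^2 + (1/9)*(m*b^2) + 2646*((1/204)*(m*b^2)) := by
          linarith only [hL0b, hL1b, hdlb, hmbb3, hmbb4]
      _ ≤ 34*(m*b^2) := by linarith only [hmbnn2]
  have hW1 : |W| ≤ 1 := by linarith only [hWb, hmb2]
  have hexpW : |Real.exp W - (1 + W + W^2/2)| ≤ 39304*(m^3*b^6) := by
    calc |Real.exp W - (1 + W + W^2/2)| ≤ |W|^3 := exp_taylor2 hW1
      _ ≤ (34*(m*b^2))^3 := pow_le_pow_left₀ (abs_nonneg W) hWb 3
      _ = 39304*(m^3*b^6) := by ring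
  have hquad : (1 + W + W^2/2) - Q = dl + (L1+dl)*(W+L0)/2 := by
    rw [hQeq, hWeq]; ring
  have hL1dl : |L1 + dl| ≤ 296*(m*b^3) := by
    calc |L1 + dl| ≤ |L1| + |dl| := abs_add_le _ _
      _ ≤ m*b^3 + 2646*((1/9)*(m*b^3)) := by linarith only [hL1b, hdlb, hmbb43]
      _ ≤ 296*(m*b^3) := by linarith only [hmbnn3]
  have hWL0 : |W + L0| ≤ 35*(m*b^2) := by
    calc |W + L0| ≤ |W| + |L0| := abs_add_le _ _
      _ ≤ 34*(m*b^2) + m*b^2 := add_le_add hWb hL0b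
      _ = 35*(m*b^2) := by ring
  have hquadb : |(1 + W + W^2/2) - Q| ≤ 2646*(m*b^4) + 5180*(m^2*b^5) := by
    rw [hquad]
    calc |dl + (L1+dl)*(W+L0)/2| ≤ |dl| + |(L1+dl)*(W+L0)/2| := abs_add_le _ _
      _ ≤ 2646*(m*b^4) + 5180*(m^2*b^5) := by
          refine add_le_add hdlb ?_
          rw [show (L1+dl)*(W+L0)/2 = (L1+dl)*((W+L0)/2) by ring, abs_mul]
          have h1 : |(W+L0)/2| ≤ (35*(m*b^2))/2 := by
            rw [abs_div, abs_of_pos (by norm_num : (0:ℝ) < 2)]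
            linarith only [hWL0]
          calc |L1+dl| * |(W+L0)/2| ≤ (296*(m*b^3)) * ((35*(m*b^2))/2) := by
                apply mul_le_mul hL1dl h1 (abs_nonneg _) (by positivity)
            _ = 5180*(m^2*b^5) := by ring
  have htotal : |Real.exp W - Q| ≤ 48000*(M^12*l^6/m^3) := by
    have t1 : |Real.exp W - Q| ≤ |Real.exp W - (1 + W + W^2/2)| + |(1 + W + W^2/2) - Q| := by
      calc |Real.exp W - Q| = |(Real.exp W - (1 + W + W^2/2)) + ((1 + W + W^2/2) - Q)| := by
            ring_nf
        _ ≤ _ := abs_add_le _ _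
    have c1 : m^3*b^6 = M^12*l^6/m^3 := by rw [hb_def]; field_simp
    have c2 : m*b^4 = M^8*l^4/m^3 := by rw [hb_def]; field_simp
    have c3 : m^2*b^5 = M^10*l^5/m^3 := by rw [hb_def]; field_simp
    have e1 : M^8 ≤ M^12 := pow_le_pow_right₀ hM1 (by norm_num)
    have e2 : l^4 ≤ l^6 := pow_le_pow_right₀ hl1 (by norm_num)
    have e3 : M^10 ≤ M^12 := pow_le_pow_right₀ hM1 (by norm_num)
    have e4 : l^5 ≤ l^6 := pow_le_pow_right₀ hl1 (by norm_num)
    have d2 : M^8*l^4 ≤ M^12*l^6 :=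
      mul_le_mul e1 e2 (pow_nonneg hl0.le 4) (pow_nonneg (by positivity) 12)
    have d3 : M^10*l^5 ≤ M^12*l^6 :=
      mul_le_mul e3 e4 (pow_nonneg hl0.le 5) (pow_nonneg (by positivity) 12)
    have d2' : M^8*l^4/m^3 ≤ M^12*l^6/m^3 := by
      exact div_le_div_of_nonneg_right d2 (by positivity)
    have d3' : M^10*l^5/m^3 ≤ M^12*l^6/m^3 := by
      exact div_le_div_of_nonneg_right d3 (by positivity)
    have hX : (0:ℝ) ≤ M^12*l^6/m^3 := by positivity
    calc |Real.exp W - Q| ≤ 39304*(m^3*b^6) + (2646*(m*b^4) + 5180*(m^2*b^5)) := by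
          linarith only [t1, hexpW, hquadb]
      _ = 39304*(M^12*l^6/m^3) + 2646*(M^8*l^4/m^3) + 5180*(M^10*l^5/m^3) := by
          rw [c1, c2, c3]; ring
      _ ≤ 39304*(M^12*l^6/m^3) + 2646*(M^12*l^6/m^3) + 5180*(M^12*l^6/m^3) := by
          linarith only [d2', d3']
      _ ≤ 48000*(M^12*l^6/m^3) := by linarith only [hX]
  have hmbb3' : m*b^3 ≤ 1/306 := by linarith only [hmbb3, hmb2]
  have hQhalf : (1:ℝ)/2 ≤ Q := by
    rw [hQeq]
    have a1 := (abs_le.1 hL0b).1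
    have a2 := (abs_le.1 hL1b).1
    linarith only [sq_nonneg L0, hmb2, hmbb3', a1, a2]
  -- final assembly
  rw [hpmf_exp, hPt]
  have hP0 : (0:ℝ) ≤ (Real.sqrt (Real.pi*m/2))⁻¹ := by positivity
  have hG : (0:ℝ) ≤ Real.exp (-(m*u^2/2)) := (Real.exp_pos _).le
  have hPG : (0:ℝ) ≤ (Real.sqrt (Real.pi*m/2))⁻¹ * Real.exp (-(m*u^2/2)) :=
    mul_nonneg hP0 hG
  have key : |(Real.sqrt (Real.pi*m/2))⁻¹ * Real.exp (-(m*u^2/2)) * Real.exp W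
      - (Real.sqrt (Real.pi*m/2))⁻¹ * Real.exp (-(m*u^2/2)) * Q|
      = ((Real.sqrt (Real.pi*m/2))⁻¹ * Real.exp (-(m*u^2/2))) * |Real.exp W - Q| := by
    rw [show (Real.sqrt (Real.pi*m/2))⁻¹ * Real.exp (-(m*u^2/2)) * Real.exp W
      - (Real.sqrt (Real.pi*m/2))⁻¹ * Real.exp (-(m*u^2/2)) * Q
      = ((Real.sqrt (Real.pi*m/2))⁻¹ * Real.exp (-(m*u^2/2))) * (Real.exp W - Q) by ring,
      abs_mul, abs_of_nonneg hPG]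
  rw [key]
  have final : |Real.exp W - Q| ≤ 96000*M^12*l^6/m^3*Q := by
    have hX : (0:ℝ) ≤ M^12*l^6/m^3 := by positivity
    calc |Real.exp W - Q| ≤ 48000*(M^12*l^6/m^3) := htotal
      _ ≤ 96000*M^12*l^6/m^3*Q := by
          have e : 96000*M^12*l^6/m^3*Q = 96000*((M^12*l^6/m^3)*Q) := by ring
          rw [e]
          nlinarith only [hX, hQhalf]
  calc ((Real.sqrt (Real.pi*m/2))⁻¹ * Real.exp (-(m*u^2/2))) * |Real.exp W - Q|
      ≤ ((Real.sqrt (Real.pi*m/2))⁻¹ * Real.exp (-(m*u^2/2))) * (96000*M^12*l^6/m^3*Q) :=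
        mul_le_mul_of_nonneg_left final hPG
    _ = 96000*M^12*l^6/m^3*((Real.sqrt (Real.pi*m/2))⁻¹ * Real.exp (-(m*u^2/2))*Q) := by
        ring
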